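/- Let Ω ⊆ ℂ be an open set, let K, L, T be compact subsets of the closure Ω̄, and let F ⊆ ℕ×ℕ contain a sequence (p̃_n, q̃_n) with p̃_n → +∞. Then for every complex polynomial P, every ε > 0 and every N ∈ ℕ, there exist (p,q) ∈ F and a complex polynomial g such that: sup_{z∈T} |g^{(l)}(z) − P^{(l)}(z)| < ε for all l = 0, 1, …, N; g ∈ D_{p,q}(ζ) for every ζ ∈ L; and the Padé approximant [p/q]_{g,ζ} is identically equal to g for every ζ ∈ L. -/

import Mathlib

open Filter

noncomputable def taylorCoeff (f : ℂ → ℂ) (ζ : ℂ) (v : ℕ) : ℂ :=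
  iteratedDeriv v f ζ / (Nat.factorial v : ℂ)

noncomputable def coeffZ (a : ℕ → ℂ) (k : ℤ) : ℂ :=
  if 0 ≤ k then a k.toNat else 0

/-- The q×q Hankel matrix with (i,j) entry `a (p-q+1+i+j)` (value 0 for negative index). -/
noncomputable def hankel (a : ℕ → ℂ) (p q : ℕ) : Matrix (Fin q) (Fin q) ℂ :=
  Matrix.of fun i j => coeffZ a ((p : ℤ) - (q : ℤ) + 1 + (i.1 : ℤ) + (j.1 : ℤ))

/-- `f ∈ D_{p,q}(ζ)` for the coefficient sequence `a` of `f` at `ζ`: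
either `q = 0` or the Hankel determinant is nonzero. -/
def MemD (a : ℕ → ℂ) (p q : ℕ) : Prop :=
  q = 0 ∨ (hankel a p q).det ≠ 0

/-- `Nu/De` (in the variable `w = z - ζ`) is a Padé approximant `[p/q]` of the series with
coefficients `a` : `deg Nu ≤ p`, `deg De ≤ q`, `De(0) = 1`, and the power series
`De(w)·Σ a_v w^v − Nu(w)` has vanishing coefficients in degrees `0,…,p+q`. -/
def IsPadeAt (a : ℕ → ℂ) (p q : ℕ) (Nu De : Polynomial ℂ) : Prop :=
  Nu.natDegree ≤ p ∧ De.natDegree ≤ q ∧ De.coeff 0 = 1 ∧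
    ∀ k ≤ p + q, (∑ i ∈ Finset.range (k + 1), De.coeff i * a (k - i)) = Nu.coeff k

open Polynomial in
lemma iteratedDeriv_polyEval (n : ℕ) (g : Polynomial ℂ) :
    iteratedDeriv n (fun w => g.eval w) = fun w => (derivative^[n] g).eval w := by
  induction n with
  | zero => simp
  | succ n ih =>
      rw [iteratedDeriv_succ, ih, Function.iterate_succ_apply']
      funext w
      exact Polynomial.deriv _

open Polynomial in
lemma taylorCoeff_poly (g : Polynomial ℂ) (ζ : ℂ) (k : ℕ) :
    taylorCoeff (fun w => g.eval w) ζ k = (Polynomial.taylor ζ g).coeff k := by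
  have h := congrFun (Polynomial.factorial_smul_hasseDeriv (R := ℂ) (k := k)) g
  unfold taylorCoeff
  rw [iteratedDeriv_polyEval, taylor_coeff, ← h, LinearMap.smul_apply]
  simp only [nsmul_eq_mul, eval_mul, eval_natCast]
  rw [mul_div_cancel_left₀]
  exact_mod_cast Nat.factorial_ne_zero k

theorem stmt10 (Ω : Set ℂ) (hΩ : IsOpen Ω) (K L T : Set ℂ)
    (hK : K ⊆ closure Ω) (hKc : IsCompact K) (hL : L ⊆ closure Ω) (hLc : IsCompact L)
    (hT : T ⊆ closure Ω) (hTc : IsCompact T)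
    (F : Set (ℕ × ℕ))
    (hF : ∃ t : ℕ → ℕ × ℕ, (∀ n, t n ∈ F) ∧ Tendsto (fun n => (t n).1) atTop atTop)
    (P : Polynomial ℂ) (ε : ℝ) (hε : 0 < ε) (N : ℕ) :
    ∃ pq ∈ F, ∃ g : Polynomial ℂ,
      (∀ l ≤ N, ∀ z ∈ T,
        ‖iteratedDeriv l (fun w => Polynomial.eval w g) z -
          iteratedDeriv l (fun w => Polynomial.eval w P) z‖ < ε) ∧
      ∀ ζ ∈ L, MemD (taylorCoeff (fun w => Polynomial.eval w g) ζ) pq.1 pq.2 ∧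
        ∃ Nu De : Polynomial ℂ,
          IsPadeAt (taylorCoeff (fun w => Polynomial.eval w g) ζ) pq.1 pq.2 Nu De ∧
          ∀ z : ℂ, Polynomial.eval (z - ζ) De ≠ 0 ∧
            Polynomial.eval (z - ζ) Nu / Polynomial.eval (z - ζ) De = Polynomial.eval z g := by
  classical
  obtain ⟨t, htF, htop⟩ := hF
  obtain ⟨n, hn⟩ := (htop.eventually (eventually_ge_atTop (P.natDegree + N + 1))).exists
  set p := (t n).1 with hp
  set q := (t n).2 with hq
  have hpP : P.natDegree < p := by omega
  have hpN : N ≤ p := by omega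
  have hp1 : 1 ≤ p := by omega
  obtain ⟨R, hR⟩ := hTc.isBounded.subset_closedBall 0
  set S : ℝ := max R 1 with hS
  have hS1 : (1:ℝ) ≤ S := le_max_right _ _
  have hS0 : (0:ℝ) < S := lt_of_lt_of_le one_pos hS1
  set M : ℝ := (p:ℝ)^p * S^p with hM
  have hM1 : (1:ℝ) ≤ M := by
    have h1 : (1:ℝ) ≤ (p:ℝ)^p := one_le_pow₀ (by exact_mod_cast hp1)
    have h2 : (1:ℝ) ≤ S^p := one_le_pow₀ hS1
    nlinarith
  have hM0 : (0:ℝ) < M := lt_of_lt_of_le one_pos hM1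
  set δ : ℝ := ε / (2 * M) with hδ
  have hδ0 : 0 < δ := by positivity
  set c : ℂ := (δ : ℂ) with hc
  have hc0 : c ≠ 0 := by rw [hc]; exact_mod_cast hδ0.ne'
  set g : Polynomial ℂ := P + Polynomial.C c * Polynomial.X ^ p with hg
  have hdegc : (Polynomial.C c * Polynomial.X ^ p).natDegree = p :=
    Polynomial.natDegree_C_mul_X_pow p c hc0
  have hdegg : g.natDegree = p := by
    rw [hg, Polynomial.natDegree_add_eq_right_of_natDegree_lt (by rw [hdegc]; exact hpP), hdegc]
  have hgcoeff : g.coeff p = c := by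
    rw [hg]
    simp [Polynomial.coeff_add, Polynomial.coeff_C_mul, Polynomial.coeff_X_pow,
      Polynomial.coeff_eq_zero_of_natDegree_lt hpP]
  -- taylor coefficient facts
  have ha : ∀ ζ k, taylorCoeff (fun w => Polynomial.eval w g) ζ k
      = (Polynomial.taylor ζ g).coeff k := fun ζ k => taylorCoeff_poly g ζ k
  have hagt : ∀ ζ k, p < k → taylorCoeff (fun w => Polynomial.eval w g) ζ k = 0 := by
    intro ζ k hk
    rw [ha]
    apply Polynomial.coeff_eq_zero_of_natDegree_lt
    rwa [Polynomial.natDegree_taylor, hdegg]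
  have hhasse : ∀ ζ : ℂ, Polynomial.hasseDeriv p g = Polynomial.C c := by
    intro ζ
    ext m
    rw [Polynomial.hasseDeriv_coeff, Polynomial.coeff_C]
    cases m with
    | zero => simp [hgcoeff]
    | succ m =>
        rw [Polynomial.coeff_eq_zero_of_natDegree_lt (by rw [hdegg]; omega)]
        simp
  have hap : ∀ ζ : ℂ, taylorCoeff (fun w => Polynomial.eval w g) ζ p = c := by
    intro ζ
    rw [ha, Polynomial.taylor_coeff, hhasse ζ, Polynomial.eval_C]
  refine ⟨t n, htF n, g, ?_, ?_⟩
  · -- approximation on T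
    intro l hl z hz
    have hzS : ‖z‖ ≤ S := by
      have h1 : z ∈ Metric.closedBall (0:ℂ) R := hR hz
      have h2 : ‖z‖ ≤ R := by simpa [Complex.dist_eq] using h1
      exact h2.trans (le_max_left _ _)
    have hgl : Polynomial.derivative^[l] g
        = Polynomial.derivative^[l] P
          + Polynomial.C c * ((p.descFactorial l : Polynomial ℂ) * Polynomial.X ^ (p - l)) := by
      rw [hg, iterate_map_add, Polynomial.iterate_derivative_C_mul,
        Polynomial.iterate_derivative_X_pow_eq_natCast_mul]
    rw [iteratedDeriv_polyEval, iteratedDeriv_polyEval, hgl]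
    simp only [Polynomial.eval_add, Polynomial.eval_mul, Polynomial.eval_C,
      Polynomial.eval_natCast, Polynomial.eval_pow, Polynomial.eval_X, add_sub_cancel_left]
    rw [norm_mul, norm_mul, norm_pow]
    have habsc : ‖c‖ = δ := by
      rw [hc, Complex.norm_real, Real.norm_of_nonneg hδ0.le]
    have h1 : ‖(p.descFactorial l : ℂ)‖ ≤ (p:ℝ)^p := by
      rw [Complex.norm_natCast]
      exact_mod_cast (Nat.descFactorial_le_pow p l).trans
        (Nat.pow_le_pow_right hp1 (hl.trans hpN))
    have h2 : ‖z‖ ^ (p - l) ≤ S ^ p :=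
      (pow_le_pow_left₀ (norm_nonneg z) hzS _).trans
        (pow_le_pow_right₀ hS1 (Nat.sub_le p l))
    have hle : ‖c‖ * (‖(p.descFactorial l : ℂ)‖ * ‖z‖ ^ (p - l))
        ≤ δ * ((p:ℝ)^p * S^p) := by
      rw [habsc]
      refine mul_le_mul_of_nonneg_left ?_ hδ0.le
      exact mul_le_mul h1 h2 (pow_nonneg (norm_nonneg z) _)
        (pow_nonneg (by positivity) _)
    have heq : δ * ((p:ℝ)^p * S^p) = ε / 2 := by
      rw [hδ, ← hM]
      field_simp
    calc ‖c‖ * (‖(p.descFactorial l : ℂ)‖ * ‖z‖ ^ (p - l))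
        ≤ ε / 2 := by rw [← heq]; exact hle
      _ < ε := by linarith
  · -- Padé part
    intro ζ hζ
    constructor
    · -- MemD
      by_cases hq0 : q = 0
      · exact Or.inl hq0
      · right
        set A := hankel (taylorCoeff (fun w => Polynomial.eval w g) ζ) p q with hA
        have hBT : (A.submatrix id Fin.revPerm).BlockTriangular id := by
          intro i j hij
          simp only [Matrix.submatrix_apply, id_eq]
          have hij' : (j:ℕ) < (i:ℕ) := hij
          have hrev : ((Fin.revPerm j : Fin q) : ℕ) = q - 1 - (j:ℕ) := by
            simp [Fin.revPerm, Fin.rev]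
            omega
          rw [hA]
          show coeffZ _ ((p : ℤ) - (q : ℤ) + 1 + ((i:ℕ) : ℤ) + (((Fin.revPerm j : Fin q) :ℕ) : ℤ)) = 0
          have hkey : ((p : ℤ) - (q : ℤ) + 1 + ((i:ℕ) : ℤ) + (((Fin.revPerm j : Fin q) :ℕ) : ℤ))
              = ((p + ((i:ℕ) - (j:ℕ)) : ℕ) : ℤ) := by
            rw [hrev]
            have hi := i.isLt
            have hj := j.isLt
            push_cast
            omega
          rw [hkey]
          unfold coeffZ
          rw [if_pos (by positivity), Int.toNat_natCast]
          exact hagt ζ _ (by omega)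
        have hdiag : ∀ i : Fin q, (A.submatrix id Fin.revPerm) i i = c := by
          intro i
          simp only [Matrix.submatrix_apply, id_eq]
          have hrev : ((Fin.revPerm i : Fin q) : ℕ) = q - 1 - (i:ℕ) := by
            simp [Fin.revPerm, Fin.rev]
            omega
          rw [hA]
          show coeffZ _ ((p : ℤ) - (q : ℤ) + 1 + ((i:ℕ) : ℤ) + (((Fin.revPerm i : Fin q) :ℕ) : ℤ)) = c
          have hkey : ((p : ℤ) - (q : ℤ) + 1 + ((i:ℕ) : ℤ) + (((Fin.revPerm i : Fin q) :ℕ) : ℤ))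
              = ((p : ℕ) : ℤ) := by
            rw [hrev]
            have hi := i.isLt
            have hq1 : 1 ≤ q := Nat.one_le_iff_ne_zero.mpr hq0
            push_cast
            omega
          rw [hkey]
          unfold coeffZ
          rw [if_pos (by positivity), Int.toNat_natCast]
          exact hap ζ
        have hdet : (A.submatrix id Fin.revPerm).det = c ^ q := by
          rw [Matrix.det_of_upperTriangular hBT]
          simp only [hdiag]
          simp
        have hperm := Matrix.det_permute' (Fin.revPerm) A
        intro h0
        rw [h0, mul_zero] at hperm
        rw [hperm] at hdet
        exact pow_ne_zero q hc0 hdet.symm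
    · -- Padé approximant
      refine ⟨Polynomial.taylor ζ g, 1, ⟨?_, ?_, ?_, ?_⟩, ?_⟩
      · rw [Polynomial.natDegree_taylor, hdegg]
      · simp
      · simp
      · intro k hk
        rw [Finset.sum_eq_single 0]
        · simp [ha]
        · intro b _ hb
          simp [Polynomial.coeff_one, hb]
        · intro h
          exact absurd (Finset.mem_range.mpr (Nat.succ_pos k)) h
      · intro z
        refine ⟨by simp, ?_⟩
        rw [Polynomial.eval_one, div_one, Polynomial.taylor_eval, sub_add_cancel]
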